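/- Let R be a reaction network on n species and let R̃ ⊆ R be any subset of its reactions. Then δ(R̃) ≤ δ(R). In particular, if δ(R̃) > 0 then δ(R) > 0. -/

import Mathlib

set_option maxHeartbeats 1000000
set_option synthInstance.maxHeartbeats 200000


open Finset

noncomputable section

namespace ReactionNetwork

/-- A (candidate) reaction network on `n` species: a finite set of ordered pairs
`(y, y')` of complexes `y, y' ∈ ℕⁿ`. -/
abbrev Rxn (n : ℕ) := Finset ((Fin n → ℕ) × (Fin n → ℕ))

/-- The set of complexes of a reaction network. -/
def complexes {n : ℕ} (R : Rxn n) : Finset (Fin n → ℕ) :=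
  R.image Prod.fst ∪ R.image Prod.snd

/-- The undirected graph on the complexes of `R`, with an edge `{y, y'}` for each
reaction `(y, y') ∈ R`. -/
def linkGraph {n : ℕ} (R : Rxn n) : SimpleGraph {y // y ∈ complexes R} where
  Adj a b := a ≠ b ∧ (((a : Fin n → ℕ), (b : Fin n → ℕ)) ∈ R ∨
    ((b : Fin n → ℕ), (a : Fin n → ℕ)) ∈ R)
  symm := ⟨fun a b h => ⟨h.1.symm, h.2.symm⟩⟩
  loopless := ⟨fun a h => h.1 rfl⟩

/-- The number of linkage classes of `R`: the number of connected components of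
the undirected graph on the complexes. -/
def numLC {n : ℕ} (R : Rxn n) : ℕ :=
  Nat.card (linkGraph R).ConnectedComponent

/-- The dimension of the stoichiometric subspace of `R`. -/
def stoichDim {n : ℕ} (R : Rxn n) : ℕ :=
  Module.finrank ℝ (Submodule.span ℝ
    {d : Fin n → ℝ | ∃ r ∈ R, d = fun i => ((r.2 i : ℝ) - (r.1 i : ℝ))})

/-- The deficiency of a reaction network: `|C(R)| - ℓ(R) - s(R)`. -/
def deficiency {n : ℕ} (R : Rxn n) : ℤ :=
  (complexes R).card - numLC R - stoichDim R

-- ### auxiliary development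

open scoped Classical
open Module

variable {n : ℕ}

lemma fst_mem_complexes {R : Rxn n} {r} (hr : r ∈ R) : r.1 ∈ complexes R := by
  simp only [complexes, Finset.mem_union, Finset.mem_image]
  exact Or.inl ⟨r, hr, rfl⟩

lemma snd_mem_complexes {R : Rxn n} {r} (hr : r ∈ R) : r.2 ∈ complexes R := by
  simp only [complexes, Finset.mem_union, Finset.mem_image]
  exact Or.inr ⟨r, hr, rfl⟩

/-- evaluation map from formal combinations of complexes to ℝⁿ -/
def Ymap (n : ℕ) : ((Fin n → ℕ) →₀ ℝ) →ₗ[ℝ] (Fin n → ℝ) :=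
  Finsupp.linearCombination ℝ (fun y i => (y i : ℝ))

def gen (r : (Fin n → ℕ) × (Fin n → ℕ)) : (Fin n → ℕ) →₀ ℝ :=
  Finsupp.single r.2 1 - Finsupp.single r.1 1

def Dspan (R : Rxn n) : Submodule ℝ ((Fin n → ℕ) →₀ ℝ) :=
  Submodule.span ℝ (gen '' (R : Set _))

lemma Ymap_single (y : Fin n → ℕ) :
    Ymap n (Finsupp.single y 1) = fun i => (y i : ℝ) := by
  simp [Ymap]

lemma Ymap_gen (r : (Fin n → ℕ) × (Fin n → ℕ)) :
    Ymap n (gen r) = fun i => ((r.2 i : ℝ) - (r.1 i : ℝ)) := by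
  funext i
  simp [gen, map_sub, Ymap_single]

lemma map_Dspan (R : Rxn n) :
    Submodule.map (Ymap n) (Dspan R) =
      Submodule.span ℝ {d : Fin n → ℝ | ∃ r ∈ R, d = fun i => ((r.2 i : ℝ) - (r.1 i : ℝ))} := by
  rw [Dspan, Submodule.map_span, ← Set.image_comp]
  congr 1
  ext d
  constructor
  · rintro ⟨r, hr, rfl⟩
    exact ⟨r, hr, Ymap_gen r⟩
  · rintro ⟨r, hr, rfl⟩
    exact ⟨r, hr, Ymap_gen r⟩

def piMap (R : Rxn n) :
    ((Fin n → ℕ) →₀ ℝ) →ₗ[ℝ] ((linkGraph R).ConnectedComponent → ℝ) where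
  toFun f := fun c => ∑ y ∈ (complexes R).attach.filter
      (fun y => (linkGraph R).connectedComponentMk y = c), f ↑y
  map_add' f g := by funext c; simp [Finset.sum_add_distrib]
  map_smul' a f := by funext c; simp [Finset.mul_sum]

lemma piMap_apply (R : Rxn n) (f) (c) :
    piMap R f c = ∑ y ∈ (complexes R).attach.filter
      (fun y => (linkGraph R).connectedComponentMk y = c), f ↑y := rfl

lemma piMap_single (R : Rxn n) {y} (hy : y ∈ complexes R) (c) :
    piMap R (Finsupp.single y (1:ℝ)) c =
      if (linkGraph R).connectedComponentMk ⟨y, hy⟩ = c then 1 else 0 := by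
  rw [piMap_apply, Finset.sum_filter]
  rw [Finset.sum_eq_single_of_mem ⟨y, hy⟩ (Finset.mem_attach _ _)]
  · simp
  · intro x _ hx
    have : y ≠ ↑x := fun h => hx (by apply Subtype.ext; exact h.symm)
    simp [Finsupp.single_apply, this]

lemma reach_sub_mem {R : Rxn n} {a b : {y // y ∈ complexes R}}
    (h : (linkGraph R).Reachable a b) :
    Finsupp.single (b : Fin n → ℕ) (1:ℝ) - Finsupp.single (a : Fin n → ℕ) 1 ∈ Dspan R := by
  obtain ⟨w⟩ := h
  induction w with
  | nil => simp
  | @cons u v w hadj p ih =>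
    have h1 : Finsupp.single (v : Fin n → ℕ) (1:ℝ) - Finsupp.single (u : Fin n → ℕ) 1
        ∈ Dspan R := by
      rcases hadj.2 with hm | hm
      · exact Submodule.subset_span ⟨((u : Fin n → ℕ), (v : Fin n → ℕ)), hm, rfl⟩
      · have : gen ((v : Fin n → ℕ), (u : Fin n → ℕ)) ∈ Dspan R :=
          Submodule.subset_span ⟨_, hm, rfl⟩
        have := neg_mem this
        simpa [gen, neg_sub] using this
    have := add_mem ih h1
    simpa [sub_add_sub_cancel] using this

lemma D_le_supported (R : Rxn n) :
    Dspan R ≤ Finsupp.supported ℝ ℝ ((complexes R : Set (Fin n → ℕ))) := by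
  rw [Dspan, Submodule.span_le]
  rintro _ ⟨r, hr, rfl⟩
  rw [SetLike.mem_coe, Finsupp.mem_supported']
  intro x hx
  have h1 : x ≠ r.1 := fun h => hx (h ▸ fst_mem_complexes hr)
  have h2 : x ≠ r.2 := fun h => hx (h ▸ snd_mem_complexes hr)
  simp [gen, Finsupp.single_apply, Ne.symm h1, Ne.symm h2]

lemma D_le_ker_pi (R : Rxn n) (hR : ∀ r ∈ R, r.1 ≠ r.2) :
    Dspan R ≤ LinearMap.ker (piMap R) := by
  rw [Dspan, Submodule.span_le]
  rintro _ ⟨r, hr, rfl⟩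
  rw [SetLike.mem_coe, LinearMap.mem_ker]
  funext c
  have hadj : (linkGraph R).Adj ⟨r.1, fst_mem_complexes hr⟩ ⟨r.2, snd_mem_complexes hr⟩ := by
    refine ⟨fun h => hR r hr (congrArg Subtype.val h), Or.inl ?_⟩
    simpa using hr
  have hmk : (linkGraph R).connectedComponentMk ⟨r.1, fst_mem_complexes hr⟩ =
      (linkGraph R).connectedComponentMk ⟨r.2, snd_mem_complexes hr⟩ :=
    SimpleGraph.ConnectedComponent.eq.2 hadj.reachable
  have : piMap R (gen r) c = piMap R (Finsupp.single r.2 1) c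
      - piMap R (Finsupp.single r.1 1) c := by
    simp [gen, map_sub]
  rw [this, piMap_single R (snd_mem_complexes hr), piMap_single R (fst_mem_complexes hr), hmk]
  simp

lemma out_mk (R : Rxn n) (c : (linkGraph R).ConnectedComponent) :
    (linkGraph R).connectedComponentMk (Quot.out c) = c := c.out_eq

lemma ker_pi_le (R : Rxn n) (f : (Fin n → ℕ) →₀ ℝ)
    (hfs : f ∈ Finsupp.supported ℝ ℝ ((complexes R : Set (Fin n → ℕ))))
    (hf : piMap R f = 0) : f ∈ Dspan R := by
  classical
  haveI : Fintype ((linkGraph R).ConnectedComponent) := Fintype.ofFinite _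
  have hrep : (∑ a ∈ (complexes R).attach, f ↑a • Finsupp.single (↑a : Fin n → ℕ) (1:ℝ)) = f := by
    have h1 : f.sum Finsupp.single = ∑ a ∈ complexes R, Finsupp.single a (f a) :=
      Finsupp.sum_of_support_subset f hfs _ (fun i _ => Finsupp.single_zero i)
    rw [show (∑ a ∈ (complexes R).attach, f ↑a • Finsupp.single (↑a : Fin n → ℕ) (1:ℝ))
        = ∑ a ∈ (complexes R).attach, Finsupp.single (↑a : Fin n → ℕ) (f ↑a) from
      Finset.sum_congr rfl (fun a _ => by rw [Finsupp.smul_single', mul_one]),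
      Finset.sum_attach (complexes R) (fun a => Finsupp.single a (f a)), ← h1,
      Finsupp.sum_single]
  set ρ : (linkGraph R).ConnectedComponent → {y // y ∈ complexes R} := fun c => Quot.out c with hρ
  have hsplit :
      (∑ a ∈ (complexes R).attach,
        f ↑a • (Finsupp.single (↑a : Fin n → ℕ) (1:ℝ)
          - Finsupp.single (↑(ρ ((linkGraph R).connectedComponentMk a)) : Fin n → ℕ) 1))
      + (∑ a ∈ (complexes R).attach,
        f ↑a • Finsupp.single (↑(ρ ((linkGraph R).connectedComponentMk a)) : Fin n → ℕ) (1:ℝ))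
      = f := by
    refine Eq.trans ?_ hrep
    rw [← Finset.sum_add_distrib]
    apply Finset.sum_congr rfl
    intro a _
    rw [smul_sub, sub_add_cancel]
  have hB : (∑ a ∈ (complexes R).attach,
        f ↑a • Finsupp.single (↑(ρ ((linkGraph R).connectedComponentMk a)) : Fin n → ℕ) (1:ℝ))
      = 0 := by
    rw [← Finset.sum_fiberwise_of_maps_to
      (g := fun a => (linkGraph R).connectedComponentMk a)
      (fun a _ => Finset.mem_univ _)]
    apply Finset.sum_eq_zero
    intro c _
    have : ∀ a ∈ (complexes R).attach.filter
        (fun a => (linkGraph R).connectedComponentMk a = c),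
        f ↑a • Finsupp.single (↑(ρ ((linkGraph R).connectedComponentMk a)) : Fin n → ℕ) (1:ℝ)
          = f ↑a • Finsupp.single (↑(ρ c) : Fin n → ℕ) (1:ℝ) := by
      intro a ha
      rw [(Finset.mem_filter.1 ha).2]
    rw [Finset.sum_congr rfl this, ← Finset.sum_smul]
    have : (∑ a ∈ (complexes R).attach.filter
        (fun a => (linkGraph R).connectedComponentMk a = c), f ↑a) = piMap R f c := rfl
    rw [this, hf]
    simp
  rw [← hsplit, hB, add_zero]
  apply Submodule.sum_mem
  intro a _
  apply Submodule.smul_mem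
  apply reach_sub_mem
  exact SimpleGraph.ConnectedComponent.eq.1 (out_mk R _)

lemma pi_surj (R : Rxn n) (g : (linkGraph R).ConnectedComponent → ℝ) :
    ∃ f ∈ Finsupp.supported ℝ ℝ ((complexes R : Set (Fin n → ℕ))), piMap R f = g := by
  classical
  haveI : Fintype ((linkGraph R).ConnectedComponent) := Fintype.ofFinite _
  refine ⟨∑ c : (linkGraph R).ConnectedComponent,
      g c • Finsupp.single (↑(Quot.out c) : Fin n → ℕ) (1:ℝ), ?_, ?_⟩
  · apply Submodule.sum_mem
    intro c _
    apply Submodule.smul_mem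
    rw [Finsupp.mem_supported']
    intro x hx
    have : x ≠ ↑(Quot.out c) := fun h => hx (h ▸ (Quot.out c).2)
    simp [Finsupp.single_apply, Ne.symm this]
  · funext c'
    rw [map_sum]
    have : ∀ c : (linkGraph R).ConnectedComponent,
        piMap R (g c • Finsupp.single (↑(Quot.out c) : Fin n → ℕ) (1:ℝ)) c'
          = if c = c' then g c else 0 := by
      intro c
      rw [map_smul]
      have h1 : piMap R (Finsupp.single (↑(Quot.out c) : Fin n → ℕ) (1:ℝ)) c'
          = if c = c' then 1 else 0 := by
        rw [piMap_single R (Quot.out c).2]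
        congr 1
        rw [show (⟨↑(Quot.out c), (Quot.out c).2⟩ : {y // y ∈ complexes R}) = Quot.out c
          from rfl, out_mk]
      rw [Pi.smul_apply, h1]
      by_cases h : c = c' <;> simp [h]
    rw [show (∑ c, piMap R (g c • Finsupp.single (↑(Quot.out c) : Fin n → ℕ) (1:ℝ))) c'
        = ∑ c, piMap R (g c • Finsupp.single (↑(Quot.out c) : Fin n → ℕ) (1:ℝ)) c'
      from Finset.sum_apply c' _ _]
    rw [Finset.sum_congr rfl (fun c _ => this c)]
    simp

lemma card_eq (R : Rxn n) (hR : ∀ r ∈ R, r.1 ≠ r.2) :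
    (complexes R).card = numLC R + finrank ℝ (Dspan R) := by
  classical
  haveI : Fintype ((linkGraph R).ConnectedComponent) := Fintype.ofFinite _
  set E := Finsupp.supported ℝ ℝ ((complexes R : Set (Fin n → ℕ))) with hE
  haveI : FiniteDimensional ℝ E :=
    LinearEquiv.finiteDimensional (Finsupp.supportedEquivFinsupp
      ((complexes R : Set (Fin n → ℕ)))).symm
  set π : E →ₗ[ℝ] ((linkGraph R).ConnectedComponent → ℝ) := (piMap R).domRestrict E with hπ
  have h1 : LinearMap.range π = ⊤ := by
    rw [LinearMap.range_eq_top]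
    intro g
    obtain ⟨f, hf, hfg⟩ := pi_surj R g
    exact ⟨⟨f, hf⟩, hfg⟩
  have h2 : LinearMap.ker π = Submodule.comap E.subtype (Dspan R) := by
    rw [hπ, LinearMap.ker_domRestrict]
    ext x
    simp only [Submodule.mem_comap, LinearMap.mem_ker, Submodule.coe_subtype]
    constructor
    · intro h
      exact ker_pi_le R x x.2 h
    · intro h
      exact D_le_ker_pi R hR h
  have h3 := LinearMap.finrank_range_add_finrank_ker (K := ℝ) (V := E) π
  have hEcard : finrank ℝ E = (complexes R).card := by
    rw [LinearEquiv.finrank_eq (Finsupp.supportedEquivFinsupp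
      ((complexes R : Set (Fin n → ℕ)))),
      LinearEquiv.finrank_eq (Finsupp.linearEquivFunOnFinite ℝ ℝ _),
      Module.finrank_fintype_fun_eq_card]
    simp
  have hrange : finrank ℝ (LinearMap.range π) = numLC R := by
    rw [h1, finrank_top, Module.finrank_fintype_fun_eq_card, numLC,
      Nat.card_eq_fintype_card]
  have hker : finrank ℝ (LinearMap.ker π) = finrank ℝ (Dspan R) := by
    rw [h2]
    exact LinearEquiv.finrank_eq (Submodule.comapSubtypeEquivOfLe (D_le_supported R))
  rw [← hEcard, ← h3, hrange, hker]

lemma finrank_D (R : Rxn n) :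
    finrank ℝ (Dspan R) =
      finrank ℝ ((LinearMap.ker (Ymap n) ⊓ Dspan R : Submodule ℝ ((Fin n → ℕ) →₀ ℝ)))
        + stoichDim R := by
  classical
  set θ : ({r // r ∈ R} → ℝ) →ₗ[ℝ] ((Fin n → ℕ) →₀ ℝ) :=
    Fintype.linearCombination ℝ (fun r : {r // r ∈ R} => gen (↑r)) with hθ
  have hθrange : LinearMap.range θ = Dspan R := by
    rw [hθ, Fintype.range_linearCombination, Dspan]
    congr 1
    rw [show (fun r : {r // r ∈ R} => gen ↑r) = gen ∘ Subtype.val from rfl,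
      Set.range_comp, Subtype.range_coe]
  set ζ : ({r // r ∈ R} → ℝ) →ₗ[ℝ] (Fin n → ℝ) := (Ymap n).comp θ with hζ
  have hζrange : finrank ℝ (LinearMap.range ζ) = stoichDim R := by
    rw [hζ, LinearMap.range_comp, hθrange, map_Dspan]
    rfl
  have hkk : LinearMap.ker θ ≤ LinearMap.ker ζ := LinearMap.ker_le_ker_comp θ (Ymap n)
  set u : (LinearMap.ker ζ) →ₗ[ℝ] ((Fin n → ℕ) →₀ ℝ) := θ.domRestrict (LinearMap.ker ζ)
    with hu
  have hurange : LinearMap.range u =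
      (LinearMap.ker (Ymap n) ⊓ Dspan R : Submodule ℝ ((Fin n → ℕ) →₀ ℝ)) := by
    rw [hu, LinearMap.range_domRestrict]
    ext x
    constructor
    · rintro ⟨g, hg, rfl⟩
      refine ⟨?_, hθrange ▸ LinearMap.mem_range_self θ g⟩
      have : ζ g = 0 := hg
      exact this
    · rintro ⟨hx1, hx2⟩
      rw [← hθrange] at hx2
      obtain ⟨g, rfl⟩ := hx2
      refine ⟨g, ?_, rfl⟩
      show ζ g = 0
      rw [hζ, LinearMap.comp_apply]
      exact hx1
  have huker : finrank ℝ (LinearMap.ker u) = finrank ℝ (LinearMap.ker θ) := by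
    rw [hu, LinearMap.ker_domRestrict]
    exact LinearEquiv.finrank_eq (Submodule.comapSubtypeEquivOfLe hkk)
  have h1 : finrank ℝ (LinearMap.range θ) + finrank ℝ (LinearMap.ker θ)
      = finrank ℝ ({r // r ∈ R} → ℝ) := LinearMap.finrank_range_add_finrank_ker θ
  have h2 : finrank ℝ (LinearMap.range ζ) + finrank ℝ (LinearMap.ker ζ)
      = finrank ℝ ({r // r ∈ R} → ℝ) := LinearMap.finrank_range_add_finrank_ker ζ
  have h3 : finrank ℝ (LinearMap.range u) + finrank ℝ (LinearMap.ker u)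
      = finrank ℝ (LinearMap.ker ζ) := LinearMap.finrank_range_add_finrank_ker u
  rw [← hurange, ← hζrange, ← hθrange]
  omega

lemma deficiency_eq (R : Rxn n) (hR : ∀ r ∈ R, r.1 ≠ r.2) :
    deficiency R =
      (finrank ℝ ((LinearMap.ker (Ymap n) ⊓ Dspan R : Submodule ℝ ((Fin n → ℕ) →₀ ℝ))) : ℤ) := by
  have h1 := card_eq R hR
  have h2 := finrank_D R
  rw [deficiency]
  omega


/-- The deficiency of a sub-network is at most the deficiency of
the full network; in particular a positively deficient sub-network forces
positive deficiency. -/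
theorem deficiency_subnetwork_le (n : ℕ) (R Rt : Rxn n)
    (hR : ∀ r ∈ R, r.1 ≠ r.2) (hsub : Rt ⊆ R) :
    deficiency Rt ≤ deficiency R ∧ (0 < deficiency Rt → 0 < deficiency R) := by
  have hRt : ∀ r ∈ Rt, r.1 ≠ r.2 := fun r hr => hR r (hsub hr)
  have hD : Dspan Rt ≤ Dspan R :=
    Submodule.span_mono (Set.image_mono (by exact_mod_cast hsub))
  have hK : (LinearMap.ker (Ymap n) ⊓ Dspan Rt : Submodule ℝ ((Fin n → ℕ) →₀ ℝ))
      ≤ LinearMap.ker (Ymap n) ⊓ Dspan R := inf_le_inf_left _ hD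
  haveI : FiniteDimensional ℝ (Dspan R) :=
    FiniteDimensional.span_of_finite ℝ (R.finite_toSet.image gen)
  haveI : FiniteDimensional ℝ
      ((LinearMap.ker (Ymap n) ⊓ Dspan R : Submodule ℝ ((Fin n → ℕ) →₀ ℝ))) :=
    Submodule.finiteDimensional_of_le inf_le_right
  have hle : finrank ℝ ((LinearMap.ker (Ymap n) ⊓ Dspan Rt : Submodule ℝ ((Fin n → ℕ) →₀ ℝ)))
      ≤ finrank ℝ ((LinearMap.ker (Ymap n) ⊓ Dspan R : Submodule ℝ ((Fin n → ℕ) →₀ ℝ))) :=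
    Submodule.finrank_mono hK
  rw [deficiency_eq R hR, deficiency_eq Rt hRt]
  constructor
  · exact_mod_cast hle
  · intro h
    omega

end ReactionNetwork
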